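/- Let x = ξ_1/2 + ... + ξ_m/2^m be an m-bit number in [0,1) and define φ(x) = Σ_{j=0}^{m-1} 2^{-j} Σ_{k=2^j}^{2^{j+1}-1} wal_k(x). Then φ(x) = m if x = 0, and φ(x) = i_0 - 2 if the first nonzero binary digit of x is ξ_{i_0} (i.e., ξ_1 = ... = ξ_{i_0-1} = 0 and ξ_{i_0} = 1). -/

import Mathlib

/-- the `i`-th dyadic digit `ξ_i` of `x ∈ [0,1)` (for `i ≥ 1`). -/
noncomputable def dyadicDigit (x : ℝ) (i : ℕ) : ℕ := (Int.toNat ⌊x * 2 ^ i⌋) % 2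

/-- the `k`-th dyadic Walsh function. -/
noncomputable def walsh (k : ℕ) (x : ℝ) : ℝ :=
  (-1) ^ (∑ i ∈ Finset.range (Nat.size k), if Nat.testBit k i then dyadicDigit x (i + 1) else 0)

/-- `φ(x) = Σ_{j=0}^{m-1} 2^{-j} Σ_{k=2^j}^{2^{j+1}-1} wal_k(x)`. -/
noncomputable def phiWal (m : ℕ) (x : ℝ) : ℝ :=
  ∑ j ∈ Finset.range m, (1 / 2 ^ j : ℝ) * ∑ k ∈ Finset.Icc (2 ^ j) (2 ^ (j + 1) - 1), walsh k x
lemma geom_half (n : ℕ) : ∑ s ∈ Finset.range n, ((1:ℝ)/2)^(s+1) = 1 - (1/2)^n := by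
  induction n with
  | zero => simp
  | succ n ih => rw [Finset.sum_range_succ, ih]; ring

lemma digit_eval (m : ℕ) (ξ : ℕ → ℕ) (hξ : ∀ l, ξ l ≤ 1)
    (i : ℕ) (h1 : 1 ≤ i) (him : i ≤ m) :
    dyadicDigit (∑ l ∈ Finset.range m, (ξ (l + 1) : ℝ) / 2 ^ (l + 1)) i = ξ i := by
  set N : ℕ := ∑ l ∈ Finset.range i, ξ (l+1) * 2^(i-1-l) with hN
  set f : ℝ := ∑ l ∈ Finset.Ico i m, (ξ (l+1) : ℝ) * (1/2)^(l-i+1) with hf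
  have hsplit : (∑ l ∈ Finset.range m, (ξ (l + 1) : ℝ) / 2 ^ (l + 1)) * 2 ^ i
      = (N : ℝ) + f := by
    rw [Finset.sum_mul, ← Finset.sum_range_add_sum_Ico _ him, hN, hf]
    push_cast
    congr 1
    · apply Finset.sum_congr rfl
      intro l hl
      have hl' : l < i := Finset.mem_range.mp hl
      have : (2:ℝ)^i = 2^(l+1) * 2^(i-1-l) := by
        rw [← pow_add]; congr 1; omega
      rw [this]
      field_simp
    · apply Finset.sum_congr rfl
      intro l hl
      have hl' : i ≤ l := (Finset.mem_Ico.mp hl).1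
      have : (2:ℝ)^(l+1) = 2^i * 2^(l-i+1) := by
        rw [← pow_add]; congr 1; omega
      rw [this, one_div, inv_pow]
      field_simp
  have hf0 : 0 ≤ f := by
    apply Finset.sum_nonneg
    intro l _; positivity
  have hf1 : f < 1 := by
    have hle : f ≤ ∑ l ∈ Finset.Ico i m, ((1:ℝ)/2)^(l-i+1) := by
      apply Finset.sum_le_sum
      intro l _
      have : (ξ (l+1) : ℝ) ≤ 1 := by exact_mod_cast hξ (l+1)
      nlinarith [pow_pos (by norm_num : (0:ℝ) < 1/2) (l-i+1)]
    have heq : ∑ l ∈ Finset.Ico i m, ((1:ℝ)/2)^(l-i+1)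
        = ∑ s ∈ Finset.range (m-i), ((1:ℝ)/2)^(s+1) := by
      rw [Finset.sum_Ico_eq_sum_range]
      apply Finset.sum_congr rfl
      intro s _; congr 1; omega
    rw [heq, geom_half] at hle
    have : (0:ℝ) < (1/2)^(m-i) := by positivity
    linarith
  have hfloor : ⌊(∑ l ∈ Finset.range m, (ξ (l + 1) : ℝ) / 2 ^ (l + 1)) * 2 ^ i⌋ = N := by
    rw [hsplit, Int.floor_natCast_add, Int.floor_eq_zero_iff.mpr ⟨hf0, hf1⟩, add_zero]
  have hNmod : N % 2 = ξ i := by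
    have hi : i = (i-1) + 1 := by omega
    rw [hN, hi, Finset.sum_range_succ]
    simp only [Nat.add_sub_cancel, Nat.sub_self, pow_zero, mul_one]
    have h2 : ∑ l ∈ Finset.range (i-1), ξ (l+1) * 2^(i-1-l)
        = 2 * ∑ l ∈ Finset.range (i-1), ξ (l+1) * 2^(i-2-l) := by
      rw [Finset.mul_sum]
      apply Finset.sum_congr rfl
      intro l hl
      have : l < i - 1 := Finset.mem_range.mp hl
      have he : i - 1 - l = (i-2-l) + 1 := by omega
      rw [he, pow_succ]; ring
    rw [h2, Nat.mul_add_mod]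
    have := hξ ((i-1)+1)
    omega
  rw [dyadicDigit, hfloor]
  simpa using hNmod
lemma T_eval (ξ : ℕ → ℕ) (j : ℕ) :
    ∑ t ∈ Finset.range (2^j),
      (-1:ℝ)^(∑ i ∈ Finset.range j, if t.testBit i then ξ (i+1) else 0)
    = ∏ i ∈ Finset.range j, (1 + (-1:ℝ)^(ξ (i+1))) := by
  induction j with
  | zero => simp
  | succ j ih =>
    have h2 : 2^(j+1) = 2^j + 2^j := by ring
    rw [h2, Finset.sum_range_add, Finset.prod_range_succ]
    have hA : ∑ t ∈ Finset.range (2^j),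
        (-1:ℝ)^(∑ i ∈ Finset.range (j+1), if t.testBit i then ξ (i+1) else 0)
        = ∑ t ∈ Finset.range (2^j),
        (-1:ℝ)^(∑ i ∈ Finset.range j, if t.testBit i then ξ (i+1) else 0) := by
      apply Finset.sum_congr rfl
      intro t ht
      congr 1
      rw [Finset.sum_range_succ, Nat.testBit_lt_two_pow (Finset.mem_range.mp ht)]
      simp
    have hB : ∑ t ∈ Finset.range (2^j),
        (-1:ℝ)^(∑ i ∈ Finset.range (j+1), if (2^j + t).testBit i then ξ (i+1) else 0)
        = ∑ t ∈ Finset.range (2^j),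
        (-1:ℝ)^(ξ (j+1)) * (-1:ℝ)^(∑ i ∈ Finset.range j, if t.testBit i then ξ (i+1) else 0) := by
      apply Finset.sum_congr rfl
      intro t ht
      rw [Finset.sum_range_succ, Nat.testBit_two_pow_add_eq,
        Nat.testBit_lt_two_pow (Finset.mem_range.mp ht)]
      have : ∑ i ∈ Finset.range j, (if (2^j + t).testBit i then ξ (i+1) else 0)
          = ∑ i ∈ Finset.range j, if t.testBit i then ξ (i+1) else 0 := by
        apply Finset.sum_congr rfl
        intro i hi
        rw [Nat.testBit_two_pow_add_gt (Finset.mem_range.mp hi)]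
      rw [this]
      simp [pow_add, mul_comm]
    rw [hA, hB, ih, ← Finset.mul_sum, ih]
    ring

lemma walsh_inner (ξ : ℕ → ℕ) (x : ℝ) (m j : ℕ) (hj : j < m)
    (hd : ∀ i, 1 ≤ i → i ≤ m → dyadicDigit x i = ξ i) :
    ∑ k ∈ Finset.Icc (2^j) (2^(j+1)-1), walsh k x
    = (-1:ℝ)^(ξ (j+1)) * ∏ i ∈ Finset.range j, (1 + (-1:ℝ)^(ξ (i+1))) := by
  have hIcc : Finset.Icc (2^j) (2^(j+1)-1) = Finset.Ico (2^j) (2^(j+1)) := by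
    rw [← Finset.Ico_add_one_right_eq_Icc]; congr 1
    have : 0 < 2^(j+1) := Nat.pow_pos (by norm_num)
    omega
  have hcard : 2^(j+1) - 2^j = 2^j := by rw [pow_succ]; omega
  rw [hIcc, Finset.sum_Ico_eq_sum_range, hcard]
  have hterm : ∀ t ∈ Finset.range (2^j), walsh (2^j + t) x
      = (-1:ℝ)^(ξ (j+1)) *
        (-1:ℝ)^(∑ i ∈ Finset.range j, if t.testBit i then ξ (i+1) else 0) := by
    intro t ht
    have ht' : t < 2^j := Finset.mem_range.mp ht
    have hsize : (2^j + t).size = j + 1 := by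
      refine le_antisymm (Nat.size_le.mpr ?_) (Nat.lt_size.mpr ?_)
      · rw [pow_succ]; omega
      · omega
    rw [walsh, hsize, Finset.sum_range_succ, Nat.testBit_two_pow_add_eq,
      Nat.testBit_lt_two_pow ht']
    have h1 : ∑ i ∈ Finset.range j, (if (2^j + t).testBit i then dyadicDigit x (i+1) else 0)
        = ∑ i ∈ Finset.range j, if t.testBit i then ξ (i+1) else 0 := by
      apply Finset.sum_congr rfl
      intro i hi
      have hi' : i < j := Finset.mem_range.mp hi
      rw [Nat.testBit_two_pow_add_gt hi', hd (i+1) (by omega) (by omega)]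
    rw [h1]
    simp [hd (j+1) (by omega) (by omega), pow_add, mul_comm]
  rw [Finset.sum_congr rfl hterm, ← Finset.mul_sum, T_eval]
theorem phiWal_eval (m : ℕ) (hm : 1 ≤ m) (ξ : ℕ → ℕ) (hξ : ∀ l, ξ l ≤ 1) (x : ℝ)
    (hx : x = ∑ l ∈ Finset.range m, (ξ (l + 1) : ℝ) / 2 ^ (l + 1)) :
    (x = 0 → phiWal m x = m) ∧
      (∀ i0, 1 ≤ i0 → i0 ≤ m → (∀ l, 1 ≤ l → l < i0 → ξ l = 0) → ξ i0 = 1 →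
        phiWal m x = (i0 : ℝ) - 2) := by
  have hd : ∀ i, 1 ≤ i → i ≤ m → dyadicDigit x i = ξ i := by
    intro i h1 h2; rw [hx]; exact digit_eval m ξ hξ i h1 h2
  have hphi : phiWal m x = ∑ j ∈ Finset.range m,
      (1 / 2 ^ j : ℝ) * ((-1:ℝ)^(ξ (j+1)) * ∏ i ∈ Finset.range j, (1 + (-1:ℝ)^(ξ (i+1)))) := by
    rw [phiWal]
    apply Finset.sum_congr rfl
    intro j hj
    rw [walsh_inner ξ x m j (Finset.mem_range.mp hj) hd]
  constructor
  · intro hx0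
    have hz : ∀ l < m, ξ (l+1) = 0 := by
      intro l hl
      have h0 : ∑ l ∈ Finset.range m, (ξ (l + 1) : ℝ) / 2 ^ (l + 1) = 0 := by rw [← hx, hx0]
      have := (Finset.sum_eq_zero_iff_of_nonneg (by intro l _; positivity)).mp h0
        l (Finset.mem_range.mpr hl)
      have h2 : (0:ℝ) < 2 ^ (l+1) := by positivity
      field_simp at this
      exact_mod_cast this
    rw [hphi]
    have : ∀ j ∈ Finset.range m, (1 / 2 ^ j : ℝ) *
        ((-1:ℝ)^(ξ (j+1)) * ∏ i ∈ Finset.range j, (1 + (-1:ℝ)^(ξ (i+1)))) = 1 := by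
      intro j hj
      have hj' : j < m := Finset.mem_range.mp hj
      have hp : ∏ i ∈ Finset.range j, (1 + (-1:ℝ)^(ξ (i+1))) = 2^j := by
        have hc : ∀ i ∈ Finset.range j, (1 + (-1:ℝ)^(ξ (i+1))) = 2 := by
          intro i hi
          rw [hz i (lt_of_lt_of_le (Finset.mem_range.mp hi) (le_of_lt hj'))]; norm_num
        rw [Finset.prod_congr rfl hc, Finset.prod_const, Finset.card_range]
      rw [hp, hz j hj']
      field_simp
    rw [Finset.sum_congr rfl this]
    simp
  · intro i0 h1 h2 hzero hone
    rw [hphi]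
    set g : ℕ → ℝ := fun j => (1 / 2 ^ j : ℝ) *
        ((-1:ℝ)^(ξ (j+1)) * ∏ i ∈ Finset.range j, (1 + (-1:ℝ)^(ξ (i+1)))) with hg
    have hzero' : ∀ j ∈ Finset.range m, j ∉ Finset.range i0 → g j = 0 := by
      intro j _ hj
      have hj' : i0 ≤ j := by simpa using hj
      have : ∏ i ∈ Finset.range j, (1 + (-1:ℝ)^(ξ (i+1))) = 0 := by
        apply Finset.prod_eq_zero (Finset.mem_range.mpr (show i0 - 1 < j by omega))
        have : (i0 - 1) + 1 = i0 := by omega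
        rw [this, hone]
        norm_num
      rw [hg]; simp [this]
    have hsub : Finset.range i0 ⊆ Finset.range m := Finset.range_subset_range.mpr h2
    rw [← Finset.sum_subset hsub hzero']
    have hi0 : i0 = (i0 - 1) + 1 := by omega
    rw [hi0, Finset.sum_range_succ]
    have hsmall : ∀ j, j ≤ i0 - 1 → g j = (-1:ℝ)^(ξ (j+1)) := by
      intro j hj
      have hp : ∏ i ∈ Finset.range j, (1 + (-1:ℝ)^(ξ (i+1))) = 2^j := by
        have hc : ∀ i ∈ Finset.range j, (1 + (-1:ℝ)^(ξ (i+1))) = 2 := by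
          intro i hi
          rw [hzero (i+1) (by omega) (by have := Finset.mem_range.mp hi; omega)]; norm_num
        rw [Finset.prod_congr rfl hc, Finset.prod_const, Finset.card_range]
      rw [hg]; simp only [hp]
      field_simp
    have hA : ∀ j ∈ Finset.range (i0 - 1), g j = 1 := by
      intro j hj
      have hj' : j < i0 - 1 := Finset.mem_range.mp hj
      rw [hsmall j (by omega), hzero (j+1) (by omega) (by omega)]
      norm_num
    rw [Finset.sum_congr rfl hA, hsmall (i0-1) le_rfl]
    have : (i0 - 1) + 1 = i0 := by omega
    rw [this, hone]
    simp
    have : ((i0 - 1 : ℕ) : ℝ) = (i0 : ℝ) - 1 := by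
      have : (1:ℕ) ≤ i0 := h1
      push_cast [this]; ring
    rw [this]; ring
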